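/- Let |·|_{G_1},…,|·|_{G_N} be norms on ℝ^n, let |·|_S be a monotone norm on ℝ^N, and let |·|_G be the associated composite norm on ℝ^{nN}. Let A ∈ ℝ^{nN×nN} be partitioned into blocks A_{ij} ∈ ℝ^{n×n}, and define the N×N nonnegative matrix Ā by Ā_{ij} = ‖A_{ij}‖_{G_{i,j}}, the operator norm of A_{ij} viewed as a linear map from (ℝ^n, |·|_{G_j}) to (ℝ^n, |·|_{G_i}). Then ‖A‖_G ≤ ‖Ā‖_S, where ‖·‖_G and ‖·‖_S denote the matrix norms induced by |·|_G and |·|_S respectively. -/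

import Mathlib

open Filter Set

/-- `ν` is a norm on the real vector space `E`. -/
def IsNorm {E : Type*} [AddCommGroup E] [Module ℝ E] (ν : E → ℝ) : Prop :=
  (∀ x, 0 ≤ ν x) ∧ (∀ x, ν x = 0 → x = 0) ∧
  (∀ (a : ℝ) (x : E), ν (a • x) = |a| * ν x) ∧
  (∀ x y : E, ν (x + y) ≤ ν x + ν y)

lemma IsNorm.zero {E : Type*} [AddCommGroup E] [Module ℝ E] {ν : E → ℝ} (h : IsNorm ν) :
    ν 0 = 0 := by
  have := h.2.2.1 0 0
  simpa using this

lemma IsNorm.sum_le {E : Type*} [AddCommGroup E] [Module ℝ E] {ν : E → ℝ} (h : IsNorm ν)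
    {ι : Type*} (s : Finset ι) (f : ι → E) : ν (∑ i ∈ s, f i) ≤ ∑ i ∈ s, ν (f i) := by
  classical
  induction s using Finset.induction_on with
  | empty => simp [h.zero]
  | insert _ _ hx ih =>
      rw [Finset.sum_insert hx, Finset.sum_insert hx]
      exact le_trans (h.2.2.2 _ _) (by linarith)

/-- Upper comparison with the sup norm. -/
lemma IsNorm.exists_upper {k : ℕ} {ν : (Fin k → ℝ) → ℝ} (h : IsNorm ν) :
    ∃ C : ℝ, 0 ≤ C ∧ ∀ x, ν x ≤ C * ‖x‖ := by
  refine ⟨∑ i, ν (fun j => if i = j then (1:ℝ) else 0), Finset.sum_nonneg fun i _ => h.1 _, ?_⟩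
  intro x
  have hx : x = ∑ i, x i • fun j => if i = j then (1:ℝ) else 0 := pi_eq_sum_univ x
  calc ν x ≤ ∑ i, ν (x i • fun j => if i = j then (1:ℝ) else 0) := by
        nth_rewrite 1 [hx]; exact h.sum_le _ _
    _ = ∑ i, |x i| * ν (fun j => if i = j then (1:ℝ) else 0) := by
        simp [h.2.2.1]
    _ ≤ ∑ i, ‖x‖ * ν (fun j => if i = j then (1:ℝ) else 0) := by
        refine Finset.sum_le_sum fun i _ => ?_
        exact mul_le_mul_of_nonneg_right (by simpa using norm_le_pi_norm x i) (h.1 _)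
    _ = (∑ i, ν (fun j => if i = j then (1:ℝ) else 0)) * ‖x‖ := by
        rw [Finset.sum_mul]; exact Finset.sum_congr rfl fun i _ => mul_comm _ _

/-- Any norm on `Fin k → ℝ` is continuous. -/
lemma IsNorm.continuous {k : ℕ} {ν : (Fin k → ℝ) → ℝ} (h : IsNorm ν) : Continuous ν := by
  obtain ⟨C, hC0, hC⟩ := h.exists_upper
  have key : ∀ x y : Fin k → ℝ, ν x - ν y ≤ C * ‖x - y‖ := by
    intro x y
    have := h.2.2.2 (x - y) y
    simp only [sub_add_cancel] at this
    linarith [hC (x - y)]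
  have lip : LipschitzWith (Real.toNNReal C) ν := by
    refine LipschitzWith.of_dist_le_mul fun x y => ?_
    rw [Real.dist_eq, dist_eq_norm, Real.coe_toNNReal C hC0]
    have h1 := key x y
    have h2 := key y x
    rw [norm_sub_rev] at h2
    rw [abs_le]
    constructor <;> linarith
  exact lip.continuous

/-- Lower comparison with the sup norm. -/
lemma IsNorm.exists_lower {k : ℕ} {ν : (Fin k → ℝ) → ℝ} (h : IsNorm ν) :
    ∃ c : ℝ, 0 < c ∧ ∀ x, c * ‖x‖ ≤ ν x := by
  rcases Nat.eq_zero_or_pos k with hk | hk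
  · refine ⟨1, one_pos, fun x => ?_⟩
    subst hk
    have hx0 : x = 0 := Subsingleton.elim x 0
    rw [hx0, h.zero, norm_zero, mul_zero]
  · haveI : Nontrivial (Fin k → ℝ) := by
      haveI : Nonempty (Fin k) := ⟨⟨0, hk⟩⟩
      infer_instance
    have hsph : (Metric.sphere (0 : Fin k → ℝ) 1).Nonempty :=
      NormedSpace.sphere_nonempty.2 zero_le_one
    obtain ⟨x0, hx0m, hx0min⟩ := (isCompact_sphere (0 : Fin k → ℝ) 1).exists_isMinOn hsph
      h.continuous.continuousOn
    have hx0n : ‖x0‖ = 1 := by simpa using hx0m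
    have hx0ne : x0 ≠ 0 := by intro hh; rw [hh] at hx0n; simp at hx0n
    have hm : 0 < ν x0 := by
      rcases lt_or_eq_of_le (h.1 x0) with hlt | heq
      · exact hlt
      · exact absurd (h.2.1 x0 heq.symm) hx0ne
    refine ⟨ν x0, hm, fun x => ?_⟩
    rcases eq_or_ne x 0 with rfl | hx
    · simp [h.zero]
    · have hxn : (0:ℝ) < ‖x‖ := norm_pos_iff.2 hx
      set u := ‖x‖⁻¹ • x with hu
      have hun : u ∈ Metric.sphere (0 : Fin k → ℝ) 1 := by
        simp [hu, norm_smul, abs_of_pos (inv_pos.2 hxn), inv_mul_cancel₀ (ne_of_gt hxn)]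
      have hle : ν x0 ≤ ν u := hx0min hun
      have : ν u = ‖x‖⁻¹ * ν x := by
        rw [hu, h.2.2.1]; rw [abs_of_pos (inv_pos.2 hxn)]
      rw [this] at hle
      have : ν x0 * ‖x‖ ≤ (‖x‖⁻¹ * ν x) * ‖x‖ :=
        mul_le_mul_of_nonneg_right hle (le_of_lt hxn)
      calc ν x0 * ‖x‖ ≤ (‖x‖⁻¹ * ν x) * ‖x‖ := this
        _ = ν x := by field_simp

/-- The operator norm of a map `L` with respect to a norm `νE` on the domain and a norm
`νF` on the codomain: the supremum of `νF (L x)` over the unit sphere `νE x = 1`. -/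
noncomputable def opNorm {E F : Type*} (νE : E → ℝ) (νF : F → ℝ) (L : E → F) : ℝ :=
  sSup {c | ∃ x, νE x = 1 ∧ c = νF (L x)}

lemma opNorm_nonneg {E F : Type*} (νE : E → ℝ) {νF : F → ℝ} (hF : ∀ y, 0 ≤ νF y)
    (L : E → F) : 0 ≤ opNorm νE νF L := by
  apply Real.sSup_nonneg
  rintro c ⟨x, -, rfl⟩
  exact hF _

/-- A linear map between pi spaces is bounded w.r.t. sup norms. -/
lemma IsLinearMap.exists_bound {k l : ℕ} {L : (Fin k → ℝ) → (Fin l → ℝ)}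
    (hL : IsLinearMap ℝ L) : ∃ B : ℝ, 0 ≤ B ∧ ∀ x, ‖L x‖ ≤ B * ‖x‖ := by
  refine ⟨∑ i, ‖L (fun j => if i = j then (1:ℝ) else 0)‖,
    Finset.sum_nonneg fun i _ => norm_nonneg _, fun x => ?_⟩
  have hx : x = ∑ i, x i • fun j => if i = j then (1:ℝ) else 0 := pi_eq_sum_univ x
  have hLx : L x = ∑ i, x i • L (fun j => if i = j then (1:ℝ) else 0) := by
    nth_rewrite 1 [hx]
    rw [show L = (IsLinearMap.mk' L hL : _ →ₗ[ℝ] _) from rfl]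
    rw [map_sum]
    exact Finset.sum_congr rfl fun i _ => LinearMap.map_smul _ _ _
  calc ‖L x‖ = ‖∑ i, x i • L (fun j => if i = j then (1:ℝ) else 0)‖ := by rw [hLx]
    _ ≤ ∑ i, ‖x i • L (fun j => if i = j then (1:ℝ) else 0)‖ := norm_sum_le _ _
    _ ≤ ∑ i, ‖x‖ * ‖L (fun j => if i = j then (1:ℝ) else 0)‖ := by
        refine Finset.sum_le_sum fun i _ => ?_
        rw [norm_smul]
        exact mul_le_mul_of_nonneg_right (by simpa using norm_le_pi_norm x i) (norm_nonneg _)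
    _ = (∑ i, ‖L (fun j => if i = j then (1:ℝ) else 0)‖) * ‖x‖ := by
        rw [Finset.sum_mul]; exact Finset.sum_congr rfl fun i _ => mul_comm _ _

lemma le_opNorm {k l : ℕ} {νE : (Fin k → ℝ) → ℝ} {νF : (Fin l → ℝ) → ℝ}
    (hE : IsNorm νE) (hF : IsNorm νF) {L : (Fin k → ℝ) → (Fin l → ℝ)}
    (hL : IsLinearMap ℝ L) (x : Fin k → ℝ) : νF (L x) ≤ opNorm νE νF L * νE x := by
  obtain ⟨C, hC0, hC⟩ := hF.exists_upper
  obtain ⟨c, hc0, hc⟩ := hE.exists_lower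
  obtain ⟨B, hB0, hB⟩ := hL.exists_bound
  have hbdd : BddAbove {d | ∃ y, νE y = 1 ∧ d = νF (L y)} := by
    refine ⟨C * B * c⁻¹, ?_⟩
    rintro d ⟨y, hy1, rfl⟩
    have h1 : νF (L y) ≤ C * ‖L y‖ := hC _
    have h2 : ‖L y‖ ≤ B * ‖y‖ := hB _
    have h3 : c * ‖y‖ ≤ νE y := hc _
    have h4 : ‖y‖ ≤ c⁻¹ := by
      rw [hy1] at h3
      rw [← le_div_iff₀' hc0] at h3
      simpa [one_div] using h3
    calc νF (L y) ≤ C * ‖L y‖ := h1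
      _ ≤ C * (B * ‖y‖) := by nlinarith [norm_nonneg (L y), norm_nonneg y]
      _ ≤ C * B * c⁻¹ := by rw [← mul_assoc]; exact mul_le_mul_of_nonneg_left h4 (mul_nonneg hC0 hB0)
  rcases eq_or_ne (νE x) 0 with hx0 | hx0
  · have hx : x = 0 := hE.2.1 x hx0
    rw [hx0, mul_zero, hx, hL.map_zero, hF.zero]
  · have hpos : 0 < νE x := lt_of_le_of_ne (hE.1 x) (Ne.symm hx0)
    set u := (νE x)⁻¹ • x with hu
    have hu1 : νE u = 1 := by
      rw [hu, hE.2.2.1, abs_of_pos (inv_pos.2 hpos), inv_mul_cancel₀ hx0]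
    have hmem : νF (L u) ∈ {d | ∃ y, νE y = 1 ∧ d = νF (L y)} := ⟨u, hu1, rfl⟩
    have hle : νF (L u) ≤ opNorm νE νF L := le_csSup hbdd hmem
    have hLu : νF (L u) = (νE x)⁻¹ * νF (L x) := by
      rw [hu, hL.map_smul, hF.2.2.1, abs_of_pos (inv_pos.2 hpos)]
    rw [hLu] at hle
    calc νF (L x) = ((νE x)⁻¹ * νF (L x)) * νE x := by field_simp
      _ ≤ opNorm νE νF L * νE x := mul_le_mul_of_nonneg_right hle (le_of_lt hpos)

/-- The action on `ℝ^{nN}` (viewed as `Fin N → Fin n → ℝ`) of the block-partitioned matrix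
`A ∈ ℝ^{nN×nN}` with blocks `A i j ∈ ℝ^{n×n}`. -/
noncomputable def blockMulVec {N n : ℕ} (A : Fin N → Fin N → Matrix (Fin n) (Fin n) ℝ)
    (η : Fin N → Fin n → ℝ) : Fin N → Fin n → ℝ :=
  fun i => ∑ j, (A i j).mulVec (η j)

lemma mulVec_isLinearMap {k : ℕ} (M : Matrix (Fin k) (Fin k) ℝ) : IsLinearMap ℝ M.mulVec :=
  ⟨fun x y => Matrix.mulVec_add M x y, fun a x => Matrix.mulVec_smul M a x⟩

/-- Let `|·|_{G_i}` be norms on `ℝ^n`, `|·|_S` a monotone norm on `ℝ^N`, and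
`|·|_G` the composite norm `|η|_G = |(|η_1|_{G_1},…,|η_N|_{G_N})|_S` on `ℝ^{nN}`.  For a
block-partitioned `A ∈ ℝ^{nN×nN}`, let `Ā` be the nonnegative `N×N` matrix with
`Ā_{ij} = ‖A_{ij}‖_{G_{i,j}}` (operator norm of `A_{ij}` from `(ℝ^n,|·|_{G_j})` to
`(ℝ^n,|·|_{G_i})`).  Then `‖A‖_G ≤ ‖Ā‖_S`, where `‖·‖_G` and `‖·‖_S` are the matrix norms
induced by `|·|_G` and `|·|_S`. -/
theorem opNorm_composite_le_opNorm_majorant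
    {n N : ℕ}
    (G : Fin N → (Fin n → ℝ) → ℝ) (hG : ∀ i, IsNorm (G i))
    (S : (Fin N → ℝ) → ℝ) (hS : IsNorm S)
    (hSmono : ∀ x y : Fin N → ℝ, (∀ i, 0 ≤ x i) → (∀ i, x i ≤ y i) → S x ≤ S y)
    (A : Fin N → Fin N → Matrix (Fin n) (Fin n) ℝ)
    (Abar : Matrix (Fin N) (Fin N) ℝ)
    (hAbar : ∀ i j, Abar i j = opNorm (G j) (G i) (A i j).mulVec) :
    opNorm (fun η : Fin N → Fin n → ℝ => S (fun i => G i (η i)))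
        (fun η : Fin N → Fin n → ℝ => S (fun i => G i (η i)))
        (blockMulVec A)
      ≤ opNorm S S Abar.mulVec := by
  have hM0 : 0 ≤ opNorm S S Abar.mulVec := opNorm_nonneg S hS.1 _
  apply Real.sSup_le _ hM0
  rintro c ⟨η, hη, rfl⟩
  set x : Fin N → ℝ := fun j => G j (η j) with hxdef
  have hx1 : S x = 1 := hη
  have comp : ∀ i, G i (blockMulVec A η i) ≤ Abar.mulVec x i := by
    intro i
    calc G i (∑ j, (A i j).mulVec (η j)) ≤ ∑ j, G i ((A i j).mulVec (η j)) :=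
          (hG i).sum_le _ _
      _ ≤ ∑ j, Abar i j * x j := by
          refine Finset.sum_le_sum fun j _ => ?_
          rw [hAbar i j]
          exact le_opNorm (hG j) (hG i) (mulVec_isLinearMap (A i j)) (η j)
      _ = Abar.mulVec x i := by
          simp [Matrix.mulVec, dotProduct]
  have step1 : S (fun i => G i (blockMulVec A η i)) ≤ S (Abar.mulVec x) :=
    hSmono _ _ (fun i => (hG i).1 _) comp
  have step2 : S (Abar.mulVec x) ≤ opNorm S S Abar.mulVec * S x :=
    le_opNorm hS hS (mulVec_isLinearMap Abar) x
  rw [hx1, mul_one] at step2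
  exact le_trans step1 step2
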